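/- Iterated contraction along a Markov chain: if X_0 → X_1 → ... → X_m is a (possibly non-homogeneous) Markov chain with transition stochastic matrices P_1,...,P_m shared by two pmfs p and p' (which may differ only in the initial distribution of X_0), then d_V(p(X_m), p'(X_m)) ≤ (∏_{k=1}^m d⁺(P_k)) · d_V(p(X_0), p'(X_0)). -/

import Mathlib

open Finset

/-- Total variation distance between two functions viewed as pmfs on a finite set. -/
noncomputable def tv {X : Type*} [Fintype X] (p q : X → ℝ) : ℝ :=
  (1/2) * ∑ x, |p x - q x|

/-- `p` is a probability mass function on a finite set. -/
def IsPmf {X : Type*} [Fintype X] (p : X → ℝ) : Prop :=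
  (∀ x, 0 ≤ p x) ∧ ∑ x, p x = 1

/-- The (upper) diameter of a stochastic matrix: the largest total variation
distance between any two of its rows. -/
noncomputable def diam {I X : Type*} [Fintype I] [Fintype X] (P : I → X → ℝ) : ℝ :=
  ⨆ i : I, ⨆ j : I, tv (P i) (P j)

/-- Marginal distribution of a (possibly non-homogeneous) Markov chain at time `k`,
with initial distribution `μ` and transition matrices `P`. -/
noncomputable def evolve {X : Type*} [Fintype X] (P : ℕ → X → X → ℝ) (μ : X → ℝ) :
    ℕ → X → ℝ
  | 0 => μ
  | k + 1 => fun x => ∑ y, evolve P μ k y * P k y x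

lemma tv_nonneg {X : Type*} [Fintype X] (p q : X → ℝ) : 0 ≤ tv p q := by
  unfold tv; positivity

lemma tv_le_one {X : Type*} [Fintype X] {p q : X → ℝ} (hp : IsPmf p) (hq : IsPmf q) :
    tv p q ≤ 1 := by
  unfold tv
  have h : ∑ x, |p x - q x| ≤ ∑ x, (p x + q x) := by
    apply Finset.sum_le_sum
    intro x _
    have h1 := hp.1 x
    have h2 := hq.1 x
    rw [abs_le]; constructor <;> linarith
  rw [Finset.sum_add_distrib, hp.2, hq.2] at h
  linarith

lemma tv_le_diam {I X : Type*} [Fintype I] [Fintype X] (P : I → X → ℝ)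
    (hP : ∀ i, IsPmf (P i)) (i j : I) : tv (P i) (P j) ≤ diam P := by
  have hbd : ∀ i j : I, tv (P i) (P j) ≤ 1 := fun i j => tv_le_one (hP i) (hP j)
  have h1 : tv (P i) (P j) ≤ ⨆ j' : I, tv (P i) (P j') :=
    le_ciSup (f := fun j' => tv (P i) (P j'))
      ⟨1, by rintro _ ⟨j', rfl⟩; exact hbd i j'⟩ j
  have h2 : (⨆ j' : I, tv (P i) (P j')) ≤ diam P := by
    haveI : Nonempty I := ⟨i⟩
    exact le_ciSup (f := fun i' => ⨆ j' : I, tv (P i') (P j'))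
      ⟨1, by rintro _ ⟨i', rfl⟩; exact ciSup_le (fun j' => hbd i' j')⟩ i
  exact h1.trans h2

lemma diam_nonneg {I X : Type*} [Fintype I] [Fintype X] [Nonempty I] (P : I → X → ℝ)
    (hP : ∀ i, IsPmf (P i)) : 0 ≤ diam P := by
  obtain ⟨i⟩ := ‹Nonempty I›
  exact (tv_nonneg (P i) (P i)).trans (tv_le_diam P hP i i)

lemma evolve_isPmf {X : Type*} [Fintype X] (P : ℕ → X → X → ℝ) (μ : X → ℝ)
    (hP : ∀ k x, IsPmf (P k x)) (hμ : IsPmf μ) : ∀ m, IsPmf (evolve P μ m) := by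
  intro m
  induction m with
  | zero => exact hμ
  | succ k ih =>
    constructor
    · intro x
      exact Finset.sum_nonneg fun y _ => mul_nonneg (ih.1 y) ((hP k y).1 x)
    · show ∑ x, ∑ y, evolve P μ k y * P k y x = 1
      rw [Finset.sum_comm]
      have : ∀ y ∈ Finset.univ, ∑ x, evolve P μ k y * P k y x = evolve P μ k y := by
        intro y _
        rw [← Finset.mul_sum, (hP k y).2, mul_one]
      rw [Finset.sum_congr rfl this, ih.2]

/-- One-step Dobrushin contraction. -/
lemma step_contraction {X : Type*} [Fintype X] (P : X → X → ℝ) (hP : ∀ x, IsPmf (P x))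
    (ν ν' : X → ℝ) (hν : IsPmf ν) (hν' : IsPmf ν') :
    tv (fun x => ∑ y, ν y * P y x) (fun x => ∑ y, ν' y * P y x) ≤ diam P * tv ν ν' := by
  set a : X → ℝ := fun y => max (ν y - ν' y) 0 with ha_def
  set b : X → ℝ := fun y => max (ν' y - ν y) 0 with hb_def
  have ha : ∀ y, 0 ≤ a y := fun y => le_max_right _ _
  have hb : ∀ y, 0 ≤ b y := fun y => le_max_right _ _
  have hab : ∀ y, ν y - ν' y = a y - b y := by
    intro y
    rcases le_total (ν y) (ν' y) with h | h
    · simp [ha_def, hb_def, max_eq_right (sub_nonpos.mpr h), max_eq_left (sub_nonneg.mpr h)]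
    · simp [ha_def, hb_def, max_eq_left (sub_nonneg.mpr h), max_eq_right (sub_nonpos.mpr h)]
  have habs : ∀ y, |ν y - ν' y| = a y + b y := by
    intro y
    rcases le_total (ν y) (ν' y) with h | h
    · rw [abs_of_nonpos (by linarith), ha_def, hb_def]
      simp [max_eq_right (sub_nonpos.mpr h), max_eq_left (sub_nonneg.mpr h)]
    · rw [abs_of_nonneg (by linarith), ha_def, hb_def]
      simp [max_eq_left (sub_nonneg.mpr h), max_eq_right (sub_nonpos.mpr h)]
  set s : ℝ := ∑ y, a y with hs_def
  have hs0 : 0 ≤ s := Finset.sum_nonneg fun y _ => ha y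
  have hsb : ∑ y, b y = s := by
    have h0 : ∑ y, (a y - b y) = 0 := by
      calc ∑ y, (a y - b y) = ∑ y, (ν y - ν' y) := by
            exact Finset.sum_congr rfl fun y _ => (hab y).symm
        _ = 0 := by rw [Finset.sum_sub_distrib, hν.2, hν'.2, sub_self]
    rw [Finset.sum_sub_distrib] at h0
    linarith
  have htv : tv ν ν' = s := by
    unfold tv
    rw [Finset.sum_congr rfl fun y _ => habs y, Finset.sum_add_distrib, hsb]
    ring
  rw [htv]
  rcases eq_or_lt_of_le hs0 with hse | hsp
  · -- s = 0, so ν = ν'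
    have haz : ∀ y, a y = 0 := by
      intro y
      have := (Finset.sum_eq_zero_iff_of_nonneg (fun y _ => ha y)).mp hse.symm
      exact this y (Finset.mem_univ y)
    have hbz : ∀ y, b y = 0 := by
      intro y
      have := (Finset.sum_eq_zero_iff_of_nonneg (fun y _ => hb y)).mp (hsb.trans hse.symm)
      exact this y (Finset.mem_univ y)
    have heq : ∀ y, ν y = ν' y := by
      intro y
      have := hab y
      rw [haz y, hbz y] at this
      linarith
    have : tv (fun x => ∑ y, ν y * P y x) (fun x => ∑ y, ν' y * P y x) = 0 := by
      unfold tv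
      have : ∀ x ∈ Finset.univ, |(∑ y, ν y * P y x) - ∑ y, ν' y * P y x| = 0 := by
        intro x _
        rw [Finset.sum_congr rfl (fun y _ => by rw [heq y])]
        simp
      rw [Finset.sum_congr rfl this]
      simp
    rw [this, ← hse, mul_zero]
  · -- s > 0
    set g : X → ℝ := fun x => ∑ y, (ν y - ν' y) * P y x with hg_def
    have hdiff : ∀ x, (∑ y, ν y * P y x) - ∑ y, ν' y * P y x = g x := by
      intro x
      rw [hg_def, ← Finset.sum_sub_distrib]
      exact Finset.sum_congr rfl fun y _ => by ring
    have hkey : ∀ x, s * g x = ∑ i, ∑ j, a i * b j * (P i x - P j x) := by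
      intro x
      have : ∑ i, ∑ j, a i * b j * (P i x - P j x)
          = ∑ i, (a i * P i x * (∑ j, b j) - a i * (∑ j, b j * P j x)) := by
        apply Finset.sum_congr rfl
        intro i _
        rw [Finset.mul_sum, Finset.mul_sum, ← Finset.sum_sub_distrib]
        exact Finset.sum_congr rfl fun j _ => by ring
      rw [this, hsb]
      rw [Finset.sum_sub_distrib, ← Finset.sum_mul, ← Finset.sum_mul, ← hs_def]
      have : g x = ∑ y, (a y - b y) * P y x := by
        rw [hg_def]
        exact Finset.sum_congr rfl fun y _ => by rw [hab y]
      rw [this,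
        Finset.sum_congr rfl fun y (_ : y ∈ Finset.univ) => sub_mul (a y) (b y) (P y x),
        Finset.sum_sub_distrib]
      ring
    have hbound : ∀ x, s * |g x| ≤ ∑ i, ∑ j, a i * b j * |P i x - P j x| := by
      intro x
      calc s * |g x| = |s * g x| := by rw [abs_mul, abs_of_nonneg hs0]
        _ = |∑ i, ∑ j, a i * b j * (P i x - P j x)| := by rw [hkey x]
        _ ≤ ∑ i, |∑ j, a i * b j * (P i x - P j x)| := Finset.abs_sum_le_sum_abs _ _
        _ ≤ ∑ i, ∑ j, a i * b j * |P i x - P j x| := by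
            apply Finset.sum_le_sum
            intro i _
            calc |∑ j, a i * b j * (P i x - P j x)| ≤ ∑ j, |a i * b j * (P i x - P j x)| :=
                  Finset.abs_sum_le_sum_abs _ _
              _ = ∑ j, a i * b j * |P i x - P j x| := by
                  apply Finset.sum_congr rfl
                  intro j _
                  rw [abs_mul, abs_of_nonneg (mul_nonneg (ha i) (hb j))]
    have hsumx : s * ∑ x, |g x| ≤ ∑ i, ∑ j, a i * b j * (2 * tv (P i) (P j)) := by
      calc s * ∑ x, |g x| = ∑ x, s * |g x| := by rw [Finset.mul_sum]
        _ ≤ ∑ x, ∑ i, ∑ j, a i * b j * |P i x - P j x| :=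
            Finset.sum_le_sum fun x _ => hbound x
        _ = ∑ i, ∑ j, a i * b j * (2 * tv (P i) (P j)) := by
            rw [Finset.sum_comm]
            apply Finset.sum_congr rfl
            intro i _
            rw [Finset.sum_comm]
            apply Finset.sum_congr rfl
            intro j _
            rw [← Finset.mul_sum]
            unfold tv
            ring
    have hfin : ∑ i, ∑ j, a i * b j * (2 * tv (P i) (P j)) ≤ 2 * diam P * s * s := by
      calc ∑ i, ∑ j, a i * b j * (2 * tv (P i) (P j))
          ≤ ∑ i, ∑ j, a i * b j * (2 * diam P) := by
            apply Finset.sum_le_sum; intro i _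
            apply Finset.sum_le_sum; intro j _
            apply mul_le_mul_of_nonneg_left _ (mul_nonneg (ha i) (hb j))
            have := tv_le_diam P hP i j
            linarith
        _ = 2 * diam P * s * s := by
            have h1 : ∑ i, ∑ j, a i * b j * (2 * diam P)
                = (∑ i, (2 * diam P) * a i) * ∑ j, b j := by
              rw [Finset.sum_mul_sum]
              exact Finset.sum_congr rfl fun i _ =>
                Finset.sum_congr rfl fun j _ => by ring
            rw [h1, hsb, ← Finset.mul_sum, ← hs_def]

    have hfinal : s * ∑ x, |g x| ≤ 2 * diam P * s * s := hsumx.trans hfin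
    have h2 : ∑ x, |g x| ≤ 2 * diam P * s := by
      have := (mul_le_mul_iff_right₀ hsp).mp (by linarith : s * ∑ x, |g x| ≤ s * (2 * diam P * s))
      linarith
    unfold tv
    rw [Finset.sum_congr rfl (fun x (_ : x ∈ Finset.univ) => by rw [hdiff x])]
    linarith

theorem stmt16 {X : Type*} [Fintype X] (P : ℕ → X → X → ℝ) (μ μ' : X → ℝ)
    (hP : ∀ k x, IsPmf (P k x)) (hμ : IsPmf μ) (hμ' : IsPmf μ') (m : ℕ) :
    tv (evolve P μ m) (evolve P μ' m) ≤
      (∏ k ∈ Finset.range m, diam (P k)) * tv μ μ' := by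
  cases isEmpty_or_nonempty X with
  | inl h =>
    simp [tv]
  | inr h =>
    induction m with
    | zero => simp [evolve]
    | succ k ih =>
      have hstep := step_contraction (P k) (hP k) (evolve P μ k) (evolve P μ' k)
        (evolve_isPmf P μ hP hμ k) (evolve_isPmf P μ' hP hμ' k)
      have hd : 0 ≤ diam (P k) := diam_nonneg (P k) (hP k)
      calc tv (evolve P μ (k+1)) (evolve P μ' (k+1))
          ≤ diam (P k) * tv (evolve P μ k) (evolve P μ' k) := hstep
        _ ≤ diam (P k) * ((∏ i ∈ Finset.range k, diam (P i)) * tv μ μ') :=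
            mul_le_mul_of_nonneg_left ih hd
        _ = (∏ i ∈ Finset.range (k+1), diam (P i)) * tv μ μ' := by
            rw [Finset.prod_range_succ]; ring
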